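/- Let X be a normed vector space, d(u,v) = ‖v−u‖, δ(u,v) = (μ/2)‖v−u‖² with μ > 0, and ℰ(t,·) Gateaux differentiable. If r < s, ϑ(s) ∈ M(t, ϑ(r)) (i.e. ϑ(s) minimizes v ↦ ℰ(t,v) + ‖v−ϑ(r)‖ + (μ/2)‖v−ϑ(r)‖²) with ϑ(s) ≠ ϑ(r), and the Gateaux differential ξ of ℰ(t,·) at ϑ(s) lies in the dual unit ball (‖ξ‖_* ≤ 1), then a contradiction arises: formally, (1 + μ‖ϑ(s)−ϑ(r)‖)‖N(ϑ(s)−ϑ(r))‖_* ≤ ‖ϑ(s)−ϑ(r)‖ where N is the subdifferential of (1/2)‖·‖², which is impossible since ‖N(x)‖_* = ‖x‖. Hence if ϑ(s) ∈ M(t,ϑ(r)) and ℰ(t,·) is Gateaux differentiable with gradient in the unit dual ball at ϑ(s), then ϑ(s) = ϑ(r). -/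

import Mathlib

open Set

/-- in a normed space with `d(u,v) = ‖v-u‖` and viscous correction
`δ(u,v) = (μ/2)‖v-u‖²`, `μ > 0`, if `y` minimizes `v ↦ E(v) + ‖v-x‖ + (μ/2)‖v-x‖²`
and `E` is Gateaux differentiable at `y` with differential `ξ` in the dual unit ball
(`‖ξ‖ ≤ 1`), then `y = x`. -/
theorem stmt19 {X : Type*} [NormedAddCommGroup X] [NormedSpace ℝ X]
    (E : X → ℝ) (μ : ℝ) (hμ : 0 < μ) (x y : X)
    (hmin : ∀ v : X, E y + ‖y - x‖ + (μ/2) * ‖y - x‖^2 ≤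
      E v + ‖v - x‖ + (μ/2) * ‖v - x‖^2)
    (ξ : X →L[ℝ] ℝ)
    (hGateaux : ∀ h : X, HasDerivAt (fun τ : ℝ => E (y + τ • h)) (ξ h) 0)
    (hξ : ‖ξ‖ ≤ 1) :
    y = x := by
  by_contra hne
  set r : ℝ := ‖y - x‖ with hr
  have hr0 : 0 < r := by
    simpa [hr] using norm_sub_pos_iff.mpr (sub_ne_zero.mpr hne).symm.symm
  set h : X := x - y with hh
  set f : ℝ → ℝ := fun τ => E (y + τ • h) + (1 - τ) * r + (μ/2) * ((1-τ)^2 * r^2)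
    with hf
  -- f has derivative D at 0
  have hd1 : HasDerivAt (fun τ : ℝ => (1 - τ) * r) (-r) 0 := by
    have : HasDerivAt (fun τ : ℝ => 1 - τ) (-1) 0 := by
      simpa using (hasDerivAt_id (0:ℝ)).const_sub (1:ℝ)
    simpa using this.mul_const r
  have hd2 : HasDerivAt (fun τ : ℝ => (μ/2) * ((1-τ)^2 * r^2)) (-(μ * r^2)) 0 := by
    have h1 : HasDerivAt (fun τ : ℝ => 1 - τ) (-1) 0 := by
      simpa using (hasDerivAt_id (0:ℝ)).const_sub (1:ℝ)
    have h2 : HasDerivAt (fun τ : ℝ => (1-τ)^2) (2 * (1 - 0)^1 * (-1)) 0 := h1.pow 2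
    have h3 := (h2.mul_const (r^2)).const_mul (μ/2)
    exact h3.congr_deriv (by ring)
  have hD : HasDerivAt f (ξ h - r - μ * r^2) 0 := by
    have := ((hGateaux h).add hd1).add hd2
    exact this.congr_deriv (by ring)
  -- f τ ≥ f 0 for τ ∈ (0,1)
  have hfmin : ∀ τ : ℝ, τ ∈ Ioo (0:ℝ) 1 → f 0 ≤ f τ := by
    intro τ hτ
    have hv : y + τ • h - x = (1 - τ) • (y - x) := by
      simp [hh, sub_smul, smul_sub]
      abel
    have hnv : ‖y + τ • h - x‖ = (1 - τ) * r := by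
      rw [hv, norm_smul, Real.norm_eq_abs, abs_of_nonneg (by linarith [hτ.2])]
    have := hmin (y + τ • h)
    simp only [hf, hnv, zero_smul, add_zero] at this ⊢
    norm_num at this ⊢
    nlinarith [this]
  -- slope tendsto D from the right
  have hslope : Filter.Tendsto (slope f 0) (nhdsWithin 0 (Ioi 0))
      (nhds (ξ h - r - μ * r^2)) := by
    have := hasDerivAt_iff_tendsto_slope.mp hD
    exact this.mono_left (nhdsWithin_mono _ (fun a ha => ne_of_gt ha))
  have hDpos : 0 ≤ ξ h - r - μ * r^2 := by
    refine ge_of_tendsto hslope ?_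
    filter_upwards [Ioo_mem_nhdsGT_of_mem (by norm_num : (0:ℝ) ∈ Ico (0:ℝ) 1)]
      with τ hτ
    have hfτ := hfmin τ hτ
    have : (0:ℝ) < τ := hτ.1
    rw [slope_def_field, sub_zero]
    exact div_nonneg (by linarith) (le_of_lt this)
  -- but ξ h ≤ r
  have hξh : ξ h ≤ r := by
    calc ξ h ≤ ‖ξ h‖ := le_abs_self _
    _ ≤ ‖ξ‖ * ‖h‖ := ξ.le_opNorm h
    _ ≤ 1 * ‖h‖ := by
        exact mul_le_mul_of_nonneg_right hξ (norm_nonneg _)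
    _ = r := by rw [one_mul, hh, hr, norm_sub_rev]
  nlinarith [sq_nonneg r, mul_pos hμ (mul_pos hr0 hr0)]
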